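/- The value of the 'guessing a random function' game equals 1: for every probability space (Ω, F, P), every jointly measurable f : Ω × [0,1) → {a,b}, and every δ > 0, the guesser has a non-anticipative response g (measurable in ω, with g on each grid interval depending only on past values of f(ω,·)) with expected payoff E[λ({t ∈ [0,1) : f(ω,t) = g(ω,t)})] ≥ 1 - δ; and trivially the payoff never exceeds 1. -/

import Mathlib

open MeasureTheory Set Filter
open scoped symmDiff Topology ENNReal

noncomputable def shiftCM (h : ℝ) : C(ℝ, ℝ) := ⟨fun t => t - h, by fun_prop⟩

lemma shiftCM_continuous : Continuous shiftCM := by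
  apply ContinuousMap.continuous_of_continuous_uncurry
  exact continuous_snd.sub continuous_fst

lemma shiftCM_mp (h : ℝ) : MeasurePreserving (shiftCM h) volume volume :=
  measurePreserving_sub_right volume h

/-- The value of the "guessing a random function" game is 1: for every
probability space, every jointly measurable `f : Ω × [0,1) → Bool`, and every
`δ > 0`, the guesser has a measurable non-anticipative response `g` (there is a
finite grid `0 = t 0 < ⋯ < t K = 1` such that on each `[t k, t (k+1))` the
guess `g ω` depends only on the restriction of `f (ω, ·)` to `[0, t k)`) whose
expected payoff `(P ⊗ λ)({(ω,t) : f (ω,t) = g ω t})` is at least `1 - δ`; and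
the payoff never exceeds 1. -/
theorem guessing_game_value_one (Ω : Type*) [MeasurableSpace Ω]
    (P : Measure Ω) [IsProbabilityMeasure P]
    (f : Ω × ℝ → Bool) (hf : Measurable f) (δ : ℝ) (hδ : 0 < δ) :
    ∃ (K : ℕ) (t : ℕ → ℝ) (g : Ω → ℝ → Bool),
      0 < K ∧ t 0 = 0 ∧ t K = 1 ∧ (∀ k < K, t k < t (k + 1)) ∧
      Measurable (fun p : Ω × ℝ => g p.1 p.2) ∧
      (∀ k < K, ∀ ω ω' : Ω,
        (∀ s ∈ Ico (0 : ℝ) (t k), f (ω, s) = f (ω', s)) →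
        ∀ s ∈ Ico (t k) (t (k + 1)), g ω s = g ω' s) ∧
      ENNReal.ofReal (1 - δ) ≤
        (P.prod (volume.restrict (Ico (0 : ℝ) 1)))
          {p : Ω × ℝ | f p = g p.1 p.2} ∧
      (P.prod (volume.restrict (Ico (0 : ℝ) 1)))
          {p : Ω × ℝ | f p = g p.1 p.2} ≤ 1 := by
  set ν : Measure ℝ := volume.restrict (Ico (0 : ℝ) 1) with hν
  have hν1 : ν univ = 1 := by simp [hν, Real.volume_Ico]
  haveI : IsProbabilityMeasure ν := ⟨hν1⟩
  set c : ℕ → ℝ := fun n => 1 / (n + 1) with hc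
  have hc_pos : ∀ n, 0 < c n := fun n => by positivity
  have hc_le1 : ∀ n : ℕ, c n ≤ 1 := by
    intro n
    rw [hc, div_le_one (by positivity)]
    push_cast; linarith
  -- product sets
  set B : Set (Ω × ℝ) := {p | f p = true ∧ p.2 ∈ Ico (-1 : ℝ) 2} with hB
  set A : ℕ → Set (Ω × ℝ) :=
    fun n => {p | f (p.1, p.2 - c n) = true ∧ p.2 - c n ∈ Ico (-1 : ℝ) 2} with hA
  have hBm : MeasurableSet B := by
    apply MeasurableSet.inter
    · exact hf (measurableSet_singleton true)
    · exact measurable_snd measurableSet_Ico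
  have hAm : ∀ n, MeasurableSet (A n) := by
    intro n
    have hmap : Measurable fun p : Ω × ℝ => (p.1, p.2 - c n) :=
      measurable_fst.prodMk (measurable_snd.sub_const _)
    apply MeasurableSet.inter
    · exact (hf.comp hmap) (measurableSet_singleton true)
    · exact (measurable_snd.sub_const _) measurableSet_Ico
  set W : ℕ → Set (Ω × ℝ) := fun n => (A n) ∆ B with hW
  have hWm : ∀ n, MeasurableSet (W n) := fun n =>
    ((hAm n).diff hBm).union (hBm.diff (hAm n))
  -- slices
  set S : Ω → Set ℝ := fun ω => {t | f (ω, t) = true} ∩ Ico (-1 : ℝ) 2 with hS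
  have hSm : ∀ ω, MeasurableSet (S ω) := by
    intro ω
    exact ((hf.comp measurable_prodMk_left) (measurableSet_singleton true)).inter
      measurableSet_Ico
  have hSvol : ∀ ω, volume (S ω) ≠ ⊤ := by
    intro ω
    refine (lt_of_le_of_lt (measure_mono inter_subset_right) ?_).ne
    simp [Real.volume_Ico]
  have hslice : ∀ n ω, Prod.mk ω ⁻¹' (W n) = (shiftCM (c n) ⁻¹' S ω) ∆ (shiftCM 0 ⁻¹' S ω) := by
    intro n ω
    have h1 : Prod.mk ω ⁻¹' (A n) = shiftCM (c n) ⁻¹' S ω := by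
      ext u
      simp only [hA, hS, shiftCM, mem_preimage, mem_setOf_eq, ContinuousMap.coe_mk,
        mem_inter_iff]
    have h2 : Prod.mk ω ⁻¹' B = shiftCM 0 ⁻¹' S ω := by
      ext u
      simp only [hB, hS, shiftCM, mem_preimage, mem_setOf_eq, ContinuousMap.coe_mk,
        mem_inter_iff, sub_zero]
    rw [hW, Set.preimage_symmDiff, h1, h2]
  -- per-ω convergence
  have hconv : ∀ ω, Tendsto (fun n : ℕ => volume (Prod.mk ω ⁻¹' (W n))) atTop (𝓝 0) := by
    intro ω
    simp only [hslice]
    apply tendsto_measure_symmDiff_preimage_nhds_zero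
      (μ := (volume : Measure ℝ)) (ν := (volume : Measure ℝ))
    · exact (shiftCM_continuous.tendsto 0).comp tendsto_one_div_add_atTop_nhds_zero_nat
    · exact .of_forall fun n => shiftCM_mp _
    · exact shiftCM_mp 0
    · exact (hSm ω).nullMeasurableSet
    · exact hSvol ω
  -- dominated convergence
  have hEmeas : ∀ n, Measurable fun ω => volume (Prod.mk ω ⁻¹' (W n)) := fun n =>
    measurable_measure_prodMk_left (hWm n)
  have hp3 : ∀ ω, ∀ h : ℝ, volume (shiftCM h ⁻¹' S ω) ≤ 3 := by
    intro ω h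
    rw [(shiftCM_mp h).measure_preimage (hSm ω).nullMeasurableSet]
    refine le_trans (measure_mono inter_subset_right) ?_
    rw [Real.volume_Ico, show (2 : ℝ) - -1 = 3 by norm_num, ENNReal.ofReal_ofNat]
  have hEbound : ∀ n, ∀ᵐ ω ∂P, volume (Prod.mk ω ⁻¹' (W n)) ≤ (6 : ℝ≥0∞) := by
    intro n
    refine ae_of_all _ fun ω => ?_
    rw [hslice]
    refine le_trans (measure_mono symmDiff_subset_union) ?_
    refine le_trans (measure_union_le _ _) ?_
    calc volume (shiftCM (c n) ⁻¹' S ω) + volume (shiftCM 0 ⁻¹' S ω)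
        ≤ 3 + 3 := add_le_add (hp3 ω _) (hp3 ω _)
      _ = 6 := by norm_num
  have hlim : Tendsto (fun n : ℕ => ∫⁻ ω, volume (Prod.mk ω ⁻¹' (W n)) ∂P) atTop (𝓝 0) := by
    have := tendsto_lintegral_of_dominated_convergence (μ := P)
      (F := fun n ω => volume (Prod.mk ω ⁻¹' (W n))) (f := fun _ => 0)
      (bound := fun _ => 6) hEmeas hEbound
      (by simp) (ae_of_all _ hconv)
    simpa using this
  -- choose N
  have hδ2 : (0 : ℝ≥0∞) < ENNReal.ofReal (δ / 2) := by
    rw [ENNReal.ofReal_pos]; linarith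
  have hev1 : ∀ᶠ n in atTop, ∫⁻ ω, volume (Prod.mk ω ⁻¹' (W n)) ∂P < ENNReal.ofReal (δ / 2) :=
    hlim.eventually_lt_const hδ2
  have hev2 : ∀ᶠ n : ℕ in atTop, c n < δ / 2 := by
    have hcc : Tendsto c atTop (𝓝 0) := tendsto_one_div_add_atTop_nhds_zero_nat
    exact hcc.eventually_lt_const (by linarith)
  obtain ⟨N, hN1, hN2⟩ := (hev1.and hev2).exists
  -- the strategy
  set K : ℕ := N + 1 with hK
  have hKpos : (0 : ℝ) < (K : ℝ) := by positivity
  have hKc : (1 : ℝ) / (K : ℝ) = c N := by rw [hc, hK]; push_cast; ring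
  set g : Ω → ℝ → Bool := fun ω s => if s < 1 / (K : ℝ) then true else f (ω, s - 1 / K)
    with hg
  have hgm : Measurable (fun p : Ω × ℝ => g p.1 p.2) := by
    apply Measurable.ite
    · exact measurable_snd measurableSet_Iio
    · exact measurable_const
    · exact hf.comp (measurable_fst.prodMk (measurable_snd.sub_const _))
  have hAgree : MeasurableSet {p : Ω × ℝ | f p = g p.1 p.2} :=
    measurableSet_eq_fun hf hgm
  -- key measure bound on disagreement
  have hrestr : P.prod ν = (P.prod volume).restrict (univ ×ˢ Ico (0 : ℝ) 1) := by
    rw [hν, ← Measure.prod_restrict, Measure.restrict_univ]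
  have hsubset : {p : Ω × ℝ | f p = g p.1 p.2}ᶜ ∩ (univ ×ˢ Ico (0 : ℝ) 1) ⊆
      (univ ×ˢ Ico (0 : ℝ) (1 / K)) ∪ W N := by
    rintro ⟨ω, s⟩ ⟨hne, -, hs0, hs1⟩
    simp only [mem_compl_iff, mem_setOf_eq] at hne
    by_cases hcase : s < 1 / (K : ℝ)
    · exact Or.inl ⟨mem_univ _, hs0, hcase⟩
    · right
      have hgs : g ω s = f (ω, s - 1 / K) := if_neg hcase
      rw [hgs] at hne
      have h1K : 1 / (K : ℝ) ≤ s := not_lt.mp hcase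
      have h1Kpos : 0 < 1 / (K : ℝ) := by positivity
      have hmemA : s - c N ∈ Ico (-1 : ℝ) 2 := by
        rw [← hKc]; constructor <;> [linarith; linarith [hc_le1 N, hKc ▸ hc_le1 N]]
      have hmemB : s ∈ Ico (-1 : ℝ) 2 := ⟨by linarith, by linarith⟩
      rw [hKc] at hne
      simp only [hW, Set.mem_symmDiff, hA, hB, mem_setOf_eq]
      cases hq1 : f (ω, s) <;> cases hq2 : f (ω, s - c N)
      · exact absurd (hq1.trans hq2.symm) hne
      · exact Or.inl ⟨⟨rfl, hmemA⟩, fun hcon => by simp [hq1] at hcon⟩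
      · exact Or.inr ⟨⟨rfl, hmemB⟩, fun hcon => by simp [hq2] at hcon⟩
      · exact absurd (hq1.trans hq2.symm) hne
  have hbound1 : (P.prod volume) (univ ×ˢ Ico (0 : ℝ) (1 / K)) ≤ ENNReal.ofReal (δ / 2) := by
    rw [Measure.prod_prod, measure_univ, one_mul, Real.volume_Ico, sub_zero, hKc]
    exact ENNReal.ofReal_le_ofReal hN2.le
  have hbound2 : (P.prod volume) (W N) ≤ ENNReal.ofReal (δ / 2) := by
    rw [Measure.prod_apply (hWm N)]
    exact hN1.le
  have key : (P.prod ν) {p : Ω × ℝ | f p = g p.1 p.2}ᶜ ≤ ENNReal.ofReal δ := by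
    rw [hrestr, Measure.restrict_apply hAgree.compl]
    calc (P.prod volume) ({p : Ω × ℝ | f p = g p.1 p.2}ᶜ ∩ univ ×ˢ Ico (0 : ℝ) 1)
        ≤ (P.prod volume) ((univ ×ˢ Ico (0 : ℝ) (1 / K)) ∪ W N) := measure_mono hsubset
      _ ≤ (P.prod volume) (univ ×ˢ Ico (0 : ℝ) (1 / K)) + (P.prod volume) (W N) :=
          measure_union_le _ _
      _ ≤ ENNReal.ofReal (δ / 2) + ENNReal.ofReal (δ / 2) := add_le_add hbound1 hbound2
      _ = ENNReal.ofReal δ := by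
          rw [← ENNReal.ofReal_add (by linarith) (by linarith)]; norm_num
  have hlow : ENNReal.ofReal (1 - δ) ≤ (P.prod ν) {p : Ω × ℝ | f p = g p.1 p.2} := by
    have hcompl : (P.prod ν) {p : Ω × ℝ | f p = g p.1 p.2} =
        1 - (P.prod ν) {p : Ω × ℝ | f p = g p.1 p.2}ᶜ := by
      have h := prob_compl_eq_one_sub (μ := P.prod ν) hAgree.compl
      rwa [compl_compl] at h
    rw [hcompl]
    calc ENNReal.ofReal (1 - δ) = ENNReal.ofReal 1 - ENNReal.ofReal δ :=
          ENNReal.ofReal_sub 1 hδ.le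
      _ = 1 - ENNReal.ofReal δ := by rw [ENNReal.ofReal_one]
      _ ≤ 1 - (P.prod ν) {p : Ω × ℝ | f p = g p.1 p.2}ᶜ := tsub_le_tsub_left key 1
  refine ⟨K, fun k => (k : ℝ) / K, g, Nat.succ_pos N, by simp, by field_simp, ?_, hgm, ?_,
    hlow, prob_le_one⟩
  · intro k _
    rw [div_lt_div_iff_of_pos_right hKpos]
    push_cast; linarith
  · -- non-anticipativity
    intro k _ ω ω' hpast s hs
    by_cases hcase : s < 1 / (K : ℝ)
    · simp only [hg, if_pos hcase]
    · rw [hg]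
      simp only [if_neg hcase]
      apply hpast
      constructor
      · linarith [not_lt.mp hcase, (by positivity : (0:ℝ) < 1 / (K:ℝ))]
      · have h2 : s < (((k + 1 : ℕ)) : ℝ) / K := hs.2
        have hcast : (((k + 1 : ℕ)) : ℝ) = (k : ℝ) + 1 := by push_cast; ring
        rw [hcast] at h2
        have h3 : ((k : ℝ) + 1) / K = (k : ℝ) / K + 1 / K := by ring
        linarith
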